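/- Two distinct order-preserving maps φ₁, φ₂ : [m] → [1] in the simplex category Δ have the same image under Segal's functor γ : Δ → Γ if and only if both φ₁ and φ₂ factor through [0]. Consequently, the Γ-set γ*Γ(−,1) restricted along γ is isomorphic to the quotient simplicial set Δ[1]/∂Δ[1]. -/

import Mathlib

/-- Segal's functor `γ` on a simplicial operator. -/
def segal {k m : ℕ} (φ : Fin (k+1) → Fin (m+1)) : Fin k → Finset (Fin m) :=
  fun i => Finset.univ.filter (fun j : Fin m => φ i.castSucc < j.succ ∧ j.succ ≤ φ i.succ)

lemma mem_segal {m : ℕ} (φ : Fin (m+1) → Fin 2) (i : Fin m) (j : Fin 1) :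
    j ∈ segal φ i ↔ (φ i.castSucc = 0 ∧ φ i.succ = 1) := by
  have h1 := (φ i.castSucc).isLt
  have h2 := (φ i.succ).isLt
  have h3 := j.isLt
  simp only [segal, Finset.mem_filter, Finset.mem_univ, true_and,
    Fin.lt_def, Fin.le_def, Fin.val_succ, Fin.ext_iff, Fin.val_zero, Fin.val_one]
  omega

lemma const_of_no_jump {m : ℕ} (φ : Fin (m+1) → Fin 2)
    (h : ∀ i : Fin m, φ i.castSucc = φ i.succ) : ∀ x, φ x = φ 0 := by
  intro x
  induction x using Fin.induction with
  | zero => rfl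
  | succ i ih => rw [← h i]; exact ih

lemma exists_jump {m : ℕ} {φ : Fin (m+1) → Fin 2} (hm : Monotone φ)
    (h : ¬ ∃ c, ∀ x, φ x = c) : ∃ i : Fin m, φ i.castSucc = 0 ∧ φ i.succ = 1 := by
  by_contra hc
  push_neg at hc
  exact h ⟨φ 0, const_of_no_jump φ (fun i => by
    have h1 := hm (Fin.castSucc_le_succ i)
    have h2 := hc i
    have a := (φ i.castSucc).isLt
    have b := (φ i.succ).isLt
    rw [Fin.le_def] at h1
    simp only [Fin.ext_iff, Fin.val_zero, Fin.val_one] at h2 ⊢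
    omega)⟩

lemma eq_of_jump {m : ℕ} {φ : Fin (m+1) → Fin 2} (hm : Monotone φ) {i : Fin m}
    (h0 : φ i.castSucc = 0) (h1 : φ i.succ = 1) :
    ∀ x, φ x = if x.val ≤ i.val then 0 else 1 := by
  intro x
  by_cases hx : x.val ≤ i.val
  · simp only [hx, if_true]
    have hle : x ≤ i.castSucc := by rw [Fin.le_def]; simpa using hx
    have := hm hle
    rw [h0] at this
    exact Fin.le_zero_iff.mp this
  · simp only [hx, if_false]
    have hle : i.succ ≤ x := by rw [Fin.le_def]; simp; omega
    have h2 := hm hle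
    rw [h1, Fin.le_def] at h2
    have := (φ x).isLt
    simp only [Fin.ext_iff, Fin.val_one] at h2 ⊢
    omega


/-- Two distinct order-preserving maps `φ₁, φ₂ : [m] → [1]` have the same image under
Segal's functor `γ : Δ → Γ` if and only if both factor through `[0]`, i.e. are constant.
Consequently, the simplicial set `γ*Γ[1]` is the quotient `Δ[1]/∂Δ[1]`: levelwise, `segal`
maps the `m`-simplices of `Δ[1]` onto the `Γ`-operators `m → 1`, identifying exactly the
constant maps (the simplices of `∂Δ[1]` and their degeneracies). -/
theorem stmt_10 (m : ℕ) :
    (∀ φ₁ φ₂ : Fin (m+1) → Fin 2, Monotone φ₁ → Monotone φ₂ → φ₁ ≠ φ₂ →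
      (segal φ₁ = segal φ₂ ↔ ((∃ c, ∀ x, φ₁ x = c) ∧ (∃ c, ∀ x, φ₂ x = c)))) ∧
    (∀ g : {g : Fin m → Finset (Fin 1) // ∀ i j, i ≠ j → Disjoint (g i) (g j)},
      ∃ φ : Fin (m+1) → Fin 2, Monotone φ ∧ segal φ = g.1) := by
  constructor
  · intro φ₁ φ₂ hm1 hm2 hne
    constructor
    · intro hseg
      by_contra hcon
      -- at least one nonconstant
      have key : ∀ (ψ₁ ψ₂ : Fin (m+1) → Fin 2), Monotone ψ₁ → Monotone ψ₂ →
          segal ψ₁ = segal ψ₂ → (¬ ∃ c, ∀ x, ψ₁ x = c) → ψ₁ = ψ₂ := by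
        intro ψ₁ ψ₂ hmm1 hmm2 hs hnc
        obtain ⟨i, hi0, hi1⟩ := exists_jump hmm1 hnc
        have hmem : (0 : Fin 1) ∈ segal ψ₂ i := by
          rw [← hs, mem_segal]; exact ⟨hi0, hi1⟩
        rw [mem_segal] at hmem
        funext x
        rw [eq_of_jump hmm1 hi0 hi1 x, eq_of_jump hmm2 hmem.1 hmem.2 x]
      rcases not_and_or.mp hcon with h | h
      · exact hne (key φ₁ φ₂ hm1 hm2 hseg h)
      · exact hne (key φ₂ φ₁ hm2 hm1 hseg.symm h).symm
    · rintro ⟨⟨c₁, hc1⟩, ⟨c₂, hc2⟩⟩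
      funext i
      ext j
      rw [mem_segal, mem_segal, hc1, hc1, hc2, hc2]
      constructor
      · rintro ⟨h0, h1⟩; rw [h0] at h1; exact absurd h1 (by decide)
      · rintro ⟨h0, h1⟩; rw [h0] at h1; exact absurd h1 (by decide)
  · rintro ⟨g, hg⟩
    by_cases he : ∀ i, g i = ∅
    · refine ⟨fun _ => 0, monotone_const, ?_⟩
      funext i
      show segal _ i = g i
      rw [he i]
      ext j
      rw [mem_segal]
      simp
    · push_neg at he
      obtain ⟨i₀, hi₀⟩ := he
      have h0mem : (0 : Fin 1) ∈ g i₀ := by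
        obtain ⟨j, hj⟩ := hi₀
        have : j = 0 := Subsingleton.elim _ _
        rwa [this] at hj
      refine ⟨fun x => if x.val ≤ i₀.val then 0 else 1, ?_, ?_⟩
      · intro a b hab
        rw [Fin.le_def] at hab
        by_cases ha : a.val ≤ i₀.val <;> by_cases hb : b.val ≤ i₀.val <;>
          simp [ha, hb] <;> omega
      · funext i
        show segal _ i = g i
        ext j
        have hj : j = 0 := Subsingleton.elim _ _
        subst hj
        rw [mem_segal]
        simp only [Fin.coe_castSucc, Fin.val_succ]
        by_cases hii : i = i₀
        · subst hii
          simp only [le_refl, if_true, show ¬ (i.val + 1 ≤ i.val) by omega, if_false]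
          simpa using h0mem
        · have hdisj := hg i i₀ hii
          have : (0 : Fin 1) ∉ g i := fun hmem =>
            (Finset.disjoint_left.mp hdisj hmem) h0mem
          simp only [this, iff_false]
          rintro ⟨h0, h1⟩
          have hiv : i.val ≠ i₀.val := fun h => hii (Fin.ext h)
          by_cases hc : i.val ≤ i₀.val <;> by_cases hs : i.val + 1 ≤ i₀.val <;>
            simp [hc, hs] at h0 h1 <;> omega
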